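/- Let V_n be the n×n unitary matrix with entries (V_n)_{p,q} = (1/√n)·e^{i(p-1)θ_q} where θ_q = (2q-1)π/n, and let J_n be the antidiagonal permutation matrix ((J_n)_{p,q} = 1 iff p+q = n+1). Then V_n⁻¹ · J_n · V_n = -A, where A is the antidiagonal matrix whose antidiagonal entries from top-right to bottom-left are e^{iπ/n}, e^{3iπ/n}, …, e^{(2n-1)iπ/n}. -/

import Mathlib

open Matrix Complex

lemma exp_inj' (n : ℕ) (q r : Fin n)
    (h : Complex.exp (Complex.I * ((2*(q:ℕ)+1 : ℕ) * Real.pi / n)) =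
         Complex.exp (Complex.I * ((2*(r:ℕ)+1 : ℕ) * Real.pi / n))) : q = r := by
  have hn : (0:ℝ) < n := by
    have := q.isLt; exact_mod_cast Nat.pos_of_ne_zero (by omega)
  rw [Complex.exp_eq_exp_iff_exists_int] at h
  obtain ⟨m, hm⟩ := h
  have him := congrArg Complex.im hm
  simp [Complex.add_im, Complex.mul_im] at him
  have hpi := Real.pi_ne_zero
  field_simp at him
  have hz : (2*(q:ℤ)+1) = (2*(r:ℤ)+1) + m * (2 * n) := by
    have : ((2*(q:ℕ)+1 : ℝ)) = (2*(r:ℕ)+1) + m * (2 * n) := by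
      have h2 : (2*(q:ℝ)+1) * Real.pi = ((2*(r:ℝ)+1) + m * (2 * n)) * Real.pi := by
        linear_combination Real.pi * him
      have := mul_right_cancel₀ hpi h2
      push_cast at this ⊢; linarith
    exact_mod_cast this
  have hd : (n:ℤ) ∣ ((q:ℤ) - r) := ⟨m, by linarith⟩
  have habs : |(q:ℤ) - r| < n := by
    have := q.isLt; have := r.isLt
    rw [abs_lt]; constructor <;> push_cast <;> omega
  have := Int.eq_zero_of_abs_lt_dvd hd habs
  have : (q:ℤ) = r := by omega
  exact Fin.ext (by exact_mod_cast this)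

lemma key_exp (n a p b q : ℕ) (ha : a + p + 1 = n) (hb : b + q + 1 = n) :
    Complex.exp (Complex.I * a * ((2*q+1 : ℕ) * Real.pi / n)) =
    -(Complex.exp (Complex.I * p * ((2*b+1 : ℕ) * Real.pi / n)) *
      Complex.exp (Complex.I * ((2*b+1 : ℕ) * Real.pi / n))) := by
  subst ha
  have hb' : b + q = a + p := by omega
  rw [← Complex.exp_add]
  have hm : Complex.I * a * (((2*q+1 : ℕ) : ℂ) * Real.pi / ((a:ℕ)+p+1 : ℕ)) =
      (Complex.I * p * (((2*b+1 : ℕ) : ℂ) * Real.pi / ((a:ℕ)+p+1 : ℕ)) +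
       Complex.I * (((2*b+1 : ℕ) : ℂ) * Real.pi / ((a:ℕ)+p+1 : ℕ))) +
      ((2*(q:ℤ) - 2*p - 1) : ℤ) * (Real.pi * Complex.I) := by
    have hn : ((a:ℂ)+p+1) ≠ 0 := by
      have h0 : (0:ℝ) < (a:ℝ)+p+1 := by positivity
      exact_mod_cast (by exact_mod_cast h0.ne' : ((a:ℂ)+p+1) ≠ 0)
    have hbc : (b:ℂ) + q = a + p := by exact_mod_cast hb'
    push_cast
    field_simp
    ring_nf
    linear_combination (-2*((p:ℂ)+1)) * hbc
  rw [hm, Complex.exp_add, Complex.exp_int_mul, Complex.exp_pi_mul_I]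
  rw [Odd.neg_one_zpow ⟨(q:ℤ) - p - 1, by ring⟩]
  ring

theorem V_n_conjugates_antidiagonal (n : ℕ)
    (V J A : Matrix (Fin n) (Fin n) ℂ)
    (hV : V = Matrix.of fun p q : Fin n =>
      (1 / Real.sqrt n : ℂ) *
        Complex.exp (Complex.I * (p : ℕ) * ((2 * ((q : ℕ) + 1) - 1 : ℕ) * Real.pi / n)))
    (hJ : J = Matrix.of fun p q : Fin n =>
      if (p : ℕ) + (q : ℕ) + 2 = n + 1 then (1 : ℂ) else 0)
    (hA : A = Matrix.of fun p q : Fin n =>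
      if (p : ℕ) + (q : ℕ) + 2 = n + 1 then
        Complex.exp (Complex.I * ((2 * ((p : ℕ) + 1) - 1 : ℕ) * Real.pi / n))
      else 0) :
    V⁻¹ * J * V = -A := by
  rcases Nat.eq_zero_or_pos n with h0 | hn
  · subst h0; exact Subsingleton.elim _ _
  have hsub : ∀ m : ℕ, 2 * (m + 1) - 1 = 2 * m + 1 := fun m => by omega
  simp only [hsub] at hV hA
  -- invertibility of V
  have hcr : (0:ℝ) < Real.sqrt n := Real.sqrt_pos.mpr (by exact_mod_cast hn)
  have hc : (1 / Real.sqrt n : ℂ) ≠ 0 := by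
    simp only [ne_eq, div_eq_zero_iff, one_ne_zero, false_or]
    exact_mod_cast hcr.ne'
  have hVv : V = (1 / Real.sqrt n : ℂ) •
      (Matrix.vandermonde fun q : Fin n =>
        Complex.exp (Complex.I * ((2*(q:ℕ)+1 : ℕ) * Real.pi / n)))ᵀ := by
    rw [hV]; ext p q
    simp only [Matrix.of_apply, Matrix.smul_apply, Matrix.transpose_apply,
      Matrix.vandermonde, Matrix.of_apply, smul_eq_mul]
    congr 1
    rw [← Complex.exp_nat_mul]
    ring_nf
  have hdet : IsUnit V.det := by
    rw [hVv, Matrix.det_smul, Matrix.det_transpose]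
    apply IsUnit.mul
    · exact (IsUnit.pow _ (Ne.isUnit hc))
    · rw [isUnit_iff_ne_zero, Ne, Matrix.det_vandermonde_eq_zero_iff]
      rintro ⟨i, j, hij, hne⟩
      exact hne (exp_inj' n i j hij)
  -- key identity : J * V = V * (-A)
  have hkey : J * V = V * (-A) := by
    subst hV hJ hA
    ext p q
    have hp := p.isLt
    have hq := q.isLt
    rw [Matrix.mul_apply, Matrix.mul_apply]
    rw [Finset.sum_eq_single (⟨n - 1 - (p:ℕ), by omega⟩ : Fin n), 
        Finset.sum_eq_single (⟨n - 1 - (q:ℕ), by omega⟩ : Fin n)]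
    · simp only [Matrix.of_apply, Matrix.neg_apply]
      rw [if_pos (by simp; omega), if_pos (by simp; omega), one_mul]
      have := key_exp n (n - 1 - (p:ℕ)) p (n - 1 - (q:ℕ)) q (by omega) (by omega)
      push_cast at this ⊢
      rw [this]
      ring
    · intro b _ hb
      simp only [Matrix.of_apply, Matrix.neg_apply]
      rw [if_neg, neg_zero, mul_zero]
      intro hcon
      exact hb (Fin.ext (by simp; omega))
    · intro hcon; exact absurd (Finset.mem_univ _) hcon
    · intro b _ hb
      simp only [Matrix.of_apply]
      rw [if_neg, zero_mul]
      intro hcon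
      exact hb (Fin.ext (by simp; omega))
    · intro hcon; exact absurd (Finset.mem_univ _) hcon
  rw [Matrix.mul_assoc, hkey, ← Matrix.mul_assoc, Matrix.nonsing_inv_mul V hdet, one_mul]
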